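/- Let G_ω be an edge-weighted star graph with n vertices, i.e., the graph on vertex set [n] whose edges are {i, n} for i = 1, …, n−1, each with a positive integer weight, and let I = I(G_ω) be its edge ideal. If I is integrally closed, then I is normal, i.e., I^k is integrally closed for every k ≥ 1. -/

import Mathlib

open MvPolynomial

/-- The edge ideal of an edge-weighted graph `G` with weight function `w`. -/
noncomputable def edgeIdeal (K : Type*) [Field K] {n : ℕ}
    (G : SimpleGraph (Fin n)) (w : Sym2 (Fin n) → ℕ) :
    Ideal (MvPolynomial (Fin n) K) :=
  Ideal.span {m | ∃ i j : Fin n, G.Adj i j ∧ m = X i ^ w s(i, j) * X j ^ w s(i, j)}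

/-- The integral closure of an ideal `I`. -/
def intClosure {R : Type*} [CommRing R] (I : Ideal R) : Set R :=
  {f | ∃ k : ℕ, 0 < k ∧ ∃ c : ℕ → R,
    (∀ i ∈ Finset.Icc 1 k, c i ∈ I ^ i) ∧
    f ^ k + ∑ i ∈ Finset.Icc 1 k, c i * f ^ (k - i) = 0}

/-- An ideal is integrally closed if it equals its integral closure. -/
def IsIntClosed {R : Type*} [CommRing R] (I : Ideal R) : Prop :=
  intClosure I = ↑I

namespace StarNormal

variable {K : Type*} [Field K] {n : ℕ}

/-- weighted degree of an exponent vector -/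
def wdeg (u : Fin n → ℕ) (α : Fin n →₀ ℕ) : ℕ := ∑ i, u i * α i

lemma wdeg_add (u : Fin n → ℕ) (α β : Fin n →₀ ℕ) :
    wdeg u (α + β) = wdeg u α + wdeg u β := by
  simp [wdeg, Finsupp.add_apply, mul_add, Finset.sum_add_distrib]

lemma wdeg_single (u : Fin n → ℕ) (i : Fin n) (m : ℕ) :
    wdeg u (Finsupp.single i m) = u i * m := by
  rw [wdeg]
  rw [Finset.sum_eq_single i]
  · rw [Finsupp.single_eq_same]
  · intro j _ hj
    rw [Finsupp.single_eq_of_ne' (Ne.symm hj), mul_zero]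
  · intro h; exact absurd (Finset.mem_univ i) h

/-- The ideal of polynomials all of whose monomials have `u`-weight at least `c`. -/
def D (K : Type*) [Field K] {n : ℕ} (u : Fin n → ℕ) (c : ℕ) :
    Ideal (MvPolynomial (Fin n) K) where
  carrier := {f | ∀ d ∈ f.support, c ≤ wdeg u d}
  zero_mem' := by intro d hd; simp at hd
  add_mem' := by
    intro f g hf hg d hd
    rcases Finset.mem_union.1 (MvPolynomial.support_add hd) with h | h
    · exact hf d h
    · exact hg d h
  smul_mem' := by
    intro p f hf d hd
    rw [smul_eq_mul] at hd
    obtain ⟨a, _, b, hb, rfl⟩ := Finset.mem_add.1 (MvPolynomial.support_mul _ _ hd)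
    calc c ≤ wdeg u b := hf b hb
    _ ≤ wdeg u a + wdeg u b := Nat.le_add_left _ _
    _ = wdeg u (a + b) := (wdeg_add u a b).symm

lemma mem_D {u : Fin n → ℕ} {c : ℕ} {f : MvPolynomial (Fin n) K} :
    f ∈ D K u c ↔ ∀ d ∈ f.support, c ≤ wdeg u d := Iff.rfl

lemma D_anti {u : Fin n → ℕ} {c c' : ℕ} (h : c ≤ c') : D K u c' ≤ D K u c :=
  fun _ hf d hd => h.trans (hf d hd)

lemma mul_mem_D {u : Fin n → ℕ} {c c' : ℕ} {f g : MvPolynomial (Fin n) K}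
    (hf : f ∈ D K u c) (hg : g ∈ D K u c') : f * g ∈ D K u (c + c') := by
  intro d hd
  obtain ⟨a, ha, b, hb, rfl⟩ := Finset.mem_add.1 (MvPolynomial.support_mul _ _ hd)
  rw [wdeg_add]
  exact Nat.add_le_add (hf a ha) (hg b hb)

lemma D_pow_le (u : Fin n → ℕ) (c : ℕ) (k : ℕ) : (D K u c) ^ k ≤ D K u (k * c) := by
  induction k with
  | zero =>
    intro f _ d hd
    simp
  | succ k ih =>
    rw [pow_succ]
    refine Ideal.mul_le.2 (fun r hr s hs => ?_)
    have := mul_mem_D (ih hr) hs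
    rwa [show k * c + c = (k+1) * c by ring] at this

lemma pow_le_D {u : Fin n → ℕ} {c : ℕ} {I : Ideal (MvPolynomial (Fin n) K)}
    (h : I ≤ D K u c) (k : ℕ) : I ^ k ≤ D K u (k * c) :=
  (Ideal.pow_right_mono h k).trans (D_pow_le u c k)

lemma pow_mem_D {u : Fin n → ℕ} {c : ℕ} {f : MvPolynomial (Fin n) K}
    (h : f ∈ D K u c) (k : ℕ) : f ^ k ∈ D K u (k * c) :=
  D_pow_le u c k (Ideal.pow_mem_pow h k)

lemma self_subset_intClosure (I : Ideal (MvPolynomial (Fin n) K)) :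
    (I : Set (MvPolynomial (Fin n) K)) ⊆ intClosure I := by
  intro f hf
  refine ⟨1, one_pos, fun _ => -f, ?_, ?_⟩
  · intro i hi
    rw [Finset.mem_Icc] at hi
    have : i = 1 := by omega
    rw [this, pow_one]
    exact neg_mem hf
  · rw [Finset.Icc_self, Finset.sum_singleton]
    ring

lemma intClosure_mono {R : Type*} [CommRing R] {I J : Ideal R} (h : I ≤ J) :
    intClosure I ⊆ intClosure J := by
  rintro f ⟨m, hm, c, hc, heq⟩
  exact ⟨m, hm, c, fun i hi => Ideal.pow_right_mono h i (hc i hi), heq⟩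

end StarNormal

namespace StarNormal

variable {K : Type*} [Field K] {n : ℕ}

lemma homog_pow (u : Fin n → ℕ) (d : ℕ) (p : MvPolynomial (Fin n) K)
    (hp : ∀ e ∈ p.support, wdeg u e = d) (m : ℕ) :
    ∀ e ∈ (p ^ m).support, wdeg u e = m * d := by
  induction m with
  | zero =>
    intro e he
    rw [pow_zero] at he
    have : e = 0 := by
      by_contra hne
      have := MvPolynomial.mem_support_iff.1 he
      rw [MvPolynomial.coeff_one, if_neg (fun h => hne h.symm)] at this
      exact this rfl
    simp [this, wdeg]
  | succ m ih =>
    intro e he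
    rw [pow_succ] at he
    obtain ⟨a, ha, b, hb, rfl⟩ := Finset.mem_add.1 (MvPolynomial.support_mul _ _ he)
    rw [wdeg_add, ih a ha, hp b hb]
    ring

lemma D_intClosed (u : Fin n → ℕ) (c : ℕ) :
    intClosure (D K u c) ⊆ ↑(D K u c) := by
  rintro f ⟨m, hm, cf, hcf, heq⟩
  by_cases hf0 : f = 0
  · rw [hf0]; exact (D K u c).zero_mem
  have hsupp : f.support.Nonempty := MvPolynomial.support_nonempty.2 hf0
  have hWne : (f.support.image (wdeg u)).Nonempty := hsupp.image _
  set d0 := (f.support.image (wdeg u)).min' hWne with hd0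
  have hmin : ∀ d ∈ f.support, d0 ≤ wdeg u d := fun d hd =>
    Finset.min'_le _ _ (Finset.mem_image_of_mem _ hd)
  by_cases hdc : c ≤ d0
  · intro d hd; exact hdc.trans (hmin d hd)
  push_neg at hdc
  exfalso
  -- the initial form f0 of f
  set f0 : MvPolynomial (Fin n) K :=
    ∑ α ∈ f.support.filter (fun α => wdeg u α = d0), monomial α (MvPolynomial.coeff α f)
    with hf0def
  have hcoeff0 : ∀ β, MvPolynomial.coeff β f0 =
      if wdeg u β = d0 then MvPolynomial.coeff β f else 0 := by
    intro β
    rw [hf0def, MvPolynomial.coeff_sum]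
    have : ∀ α ∈ f.support.filter (fun α => wdeg u α = d0),
        MvPolynomial.coeff β (monomial α (MvPolynomial.coeff α f)) =
        if α = β then MvPolynomial.coeff α f else 0 := by
      intro α _; rw [MvPolynomial.coeff_monomial]
    rw [Finset.sum_congr rfl this, Finset.sum_ite_eq']
    by_cases h1 : wdeg u β = d0
    · rw [if_pos h1]
      by_cases h2 : β ∈ f.support
      · rw [if_pos (Finset.mem_filter.2 ⟨h2, h1⟩)]
      · rw [if_neg (fun h => h2 (Finset.mem_filter.1 h).1)]
        exact (MvPolynomial.notMem_support_iff.1 h2).symm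
    · have hnm : β ∉ f.support.filter (fun α => wdeg u α = d0) :=
        fun h => h1 (Finset.mem_filter.1 h).2
      rw [if_neg h1, if_neg hnm]
  -- f0 is nonzero
  obtain ⟨αh, hαh⟩ := Finset.mem_image.1 (Finset.min'_mem _ hWne)
  have hf0ne : f0 ≠ 0 := by
    intro h
    have := hcoeff0 αh
    rw [h, MvPolynomial.coeff_zero, hαh.2, if_pos rfl] at this
    exact (MvPolynomial.mem_support_iff.1 hαh.1) this.symm
  have hf0hom : ∀ e ∈ f0.support, wdeg u e = d0 := by
    intro e he
    have := MvPolynomial.mem_support_iff.1 he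
    rw [hcoeff0 e] at this
    by_contra h
    rw [if_neg h] at this
    exact this rfl
  have hf0D : f0 ∈ D K u d0 := fun e he => (hf0hom e he).ge
  set g := f - f0 with hg
  have hgD : g ∈ D K u (d0 + 1) := by
    intro e he
    have hce := MvPolynomial.mem_support_iff.1 he
    rw [hg, MvPolynomial.coeff_sub, hcoeff0 e] at hce
    by_cases h1 : wdeg u e = d0
    · rw [if_pos h1, sub_self] at hce; exact absurd rfl hce
    · rw [if_neg h1, sub_zero] at hce
      have := hmin e (MvPolynomial.mem_support_iff.2 hce)
      omega
  have hfeq : f = f0 + g := by rw [hg]; ring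
  have hfD : f ∈ D K u d0 := fun d hd => hmin d hd
  -- f^m - f0^m has all weights > m*d0
  have hT : f ^ m - f0 ^ m ∈ D K u (m * d0 + 1) := by
    have hexp : f ^ m = ∑ j ∈ Finset.range (m + 1),
        f0 ^ j * g ^ (m - j) * ↑(m.choose j) := by
      rw [hfeq, add_pow]
    rw [hexp, Finset.sum_range_succ]
    have hlast : f0 ^ m * g ^ (m - m) * ↑(m.choose m) = f0 ^ m := by
      simp
    rw [hlast, add_sub_cancel_right]
    refine Submodule.sum_mem _ (fun j hj => ?_)
    have hjm : j < m := Finset.mem_range.1 hj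
    refine Ideal.mul_mem_right _ _ ?_
    have h1 : f0 ^ j ∈ D K u (j * d0) := pow_mem_D hf0D j
    have h2 : g ^ (m - j) ∈ D K u ((m - j) * (d0 + 1)) := pow_mem_D hgD (m - j)
    refine D_anti ?_ (mul_mem_D h1 h2)
    have hmj : 1 ≤ m - j := by omega
    have e2 : j * d0 + (m - j) * d0 = m * d0 := by
      rw [← add_mul]; congr 1; omega
    calc m * d0 + 1 = j * d0 + (m - j) * d0 + 1 := by rw [e2]
    _ ≤ j * d0 + (m - j) * d0 + (m - j) * 1 := by
        have := Nat.mul_le_mul hmj (le_refl 1)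
        omega
    _ ≤ j * d0 + ((m - j) * d0 + (m - j) * (1:ℕ)) := by omega
    _ = j * d0 + (m - j) * (d0 + 1) := by ring
  -- the sum term has all weights > m*d0
  have hS : (∑ i ∈ Finset.Icc 1 m, cf i * f ^ (m - i)) ∈ D K u (m * d0 + 1) := by
    refine Submodule.sum_mem _ (fun i hi => ?_)
    rw [Finset.mem_Icc] at hi
    have h1 : cf i ∈ D K u (i * c) := pow_le_D (le_refl (D K u c)) i (hcf i (Finset.mem_Icc.2 hi))
    have h2 : f ^ (m - i) ∈ D K u ((m - i) * d0) := pow_mem_D hfD (m - i)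
    refine D_anti ?_ (mul_mem_D h1 h2)
    have e2 : i * d0 + (m - i) * d0 = m * d0 := by
      rw [← add_mul]; congr 1; omega
    have e3 : i * (d0 + 1) ≤ i * c := Nat.mul_le_mul_left i (by omega)
    have e4 : i * (d0 + 1) = i * d0 + i := by ring
    omega
  -- conclude f0^m ∈ D, contradiction
  have hkey : f0 ^ m = (f ^ m + ∑ i ∈ Finset.Icc 1 m, cf i * f ^ (m - i))
      - (∑ i ∈ Finset.Icc 1 m, cf i * f ^ (m - i)) - (f ^ m - f0 ^ m) := by ring
  rw [heq] at hkey
  have hmem : f0 ^ m ∈ D K u (m * d0 + 1) := by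
    rw [hkey]
    exact Submodule.sub_mem _ (Submodule.sub_mem _ (Submodule.zero_mem _) hS) hT
  obtain ⟨β, hβ⟩ := MvPolynomial.support_nonempty.2 (pow_ne_zero m hf0ne)
  have := hmem β hβ
  rw [homog_pow u d0 f0 hf0hom m β hβ] at this
  omega

end StarNormal

namespace StarNormal

variable {K : Type*} [Field K] {n : ℕ}

lemma monomial_mem_span {E : Set (Fin n →₀ ℕ)} {g α : Fin n →₀ ℕ} (hg : g ∈ E)
    (hle : g ≤ α) (co : K) :
    monomial α co ∈ Ideal.span ((fun d => (monomial d (1:K))) '' E) := by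
  have : monomial α co = monomial (α - g) co * monomial g 1 := by
    rw [monomial_mul, mul_one]
    congr 1
    rw [tsub_add_cancel_of_le hle]
  rw [this]
  exact Ideal.mul_mem_left _ _ (Ideal.subset_span ⟨g, hg, rfl⟩)

lemma exists_le_of_mem_span {E : Set (Fin n →₀ ℕ)} {f : MvPolynomial (Fin n) K}
    (hf : f ∈ Ideal.span ((fun d => (monomial d (1:K))) '' E)) :
    ∀ α, MvPolynomial.coeff α f ≠ 0 → ∃ g ∈ E, g ≤ α := by
  refine Submodule.span_induction ?_ ?_ ?_ ?_ hf
  · rintro x ⟨g, hg, rfl⟩ α hα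
    rw [MvPolynomial.coeff_monomial] at hα
    by_cases h : g = α
    · exact ⟨g, hg, h.le⟩
    · rw [if_neg h] at hα; exact absurd rfl hα
  · intro α hα; simp at hα
  · intro x y _ _ ihx ihy α hα
    rw [MvPolynomial.coeff_add] at hα
    by_cases h : MvPolynomial.coeff α x = 0
    · exact ihy α (by rwa [h, zero_add] at hα)
    · exact ihx α h
  · intro a x _ ih α hα
    rw [smul_eq_mul, MvPolynomial.coeff_mul] at hα
    obtain ⟨⟨β, γ⟩, hmem, hne⟩ := Finset.exists_ne_zero_of_sum_ne_zero hα
    have hγ : MvPolynomial.coeff γ x ≠ 0 := fun h => hne (by simp [h])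
    obtain ⟨g, hg, hle⟩ := ih γ hγ
    refine ⟨g, hg, hle.trans ?_⟩
    rw [← Finset.HasAntidiagonal.mem_antidiagonal.1 hmem]
    exact le_add_self

/-- the three weight functions -/
def uA (c0 : Fin n) : Fin n → ℕ := fun t => if t = c0 then 1 else 0
def uB (i0 c0 : Fin n) (b : ℕ) : Fin n → ℕ :=
  fun t => if t = c0 then 1 else if t = i0 then 0 else b
def uC (i0 c0 : Fin n) (b : ℕ) : Fin n → ℕ :=
  fun t => if t = c0 then 0 else if t = i0 then 1 else b + 1

lemma wdeg_uA (c0 : Fin n) (α : Fin n →₀ ℕ) : wdeg (uA c0) α = α c0 := by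
  rw [wdeg, Finset.sum_eq_single c0]
  · simp [uA]
  · intro t _ ht; simp [uA, ht]
  · intro h; exact absurd (Finset.mem_univ c0) h

lemma wdeg_split (i0 c0 : Fin n) (h : i0 ≠ c0) (u : Fin n → ℕ) (α : Fin n →₀ ℕ) :
    wdeg u α = (∑ t ∈ (Finset.univ.erase c0).erase i0, u t * α t)
      + u i0 * α i0 + u c0 * α c0 := by
  rw [wdeg]
  rw [← Finset.sum_erase_add Finset.univ _ (Finset.mem_univ c0)]
  congr 1
  rw [← Finset.sum_erase_add _ _ (Finset.mem_erase.2 ⟨h, Finset.mem_univ i0⟩)]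

lemma wdeg_uB (i0 c0 : Fin n) (h : i0 ≠ c0) (b : ℕ) (α : Fin n →₀ ℕ) :
    wdeg (uB i0 c0 b) α = b * (∑ t ∈ (Finset.univ.erase c0).erase i0, α t) + α c0 := by
  rw [wdeg_split i0 c0 h]
  have h1 : ∀ t ∈ (Finset.univ.erase c0).erase i0, uB i0 c0 b t * α t = b * α t := by
    intro t ht
    rw [Finset.mem_erase] at ht
    have ht2 := Finset.mem_erase.1 ht.2
    simp [uB, ht.1, ht2.1]
  rw [Finset.sum_congr rfl h1, ← Finset.mul_sum]
  simp [uB, h]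

lemma wdeg_uC (i0 c0 : Fin n) (h : i0 ≠ c0) (b : ℕ) (α : Fin n →₀ ℕ) :
    wdeg (uC i0 c0 b) α = (b + 1) * (∑ t ∈ (Finset.univ.erase c0).erase i0, α t) + α i0 := by
  rw [wdeg_split i0 c0 h]
  have h1 : ∀ t ∈ (Finset.univ.erase c0).erase i0, uC i0 c0 b t * α t = (b+1) * α t := by
    intro t ht
    rw [Finset.mem_erase] at ht
    have ht2 := Finset.mem_erase.1 ht.2
    simp [uC, ht.1, ht2.1]
  rw [Finset.sum_congr rfl h1, ← Finset.mul_sum]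
  simp [uC, h]

end StarNormal

namespace StarNormal

variable {K : Type*} [Field K] {n : ℕ}

lemma monomial_mem_pow (i0 c0 : Fin n) (hi0 : i0 ≠ c0) (b : ℕ)
    (I : Ideal (MvPolynomial (Fin n) K))
    (hheavy : monomial (Finsupp.single i0 (b+1) + Finsupp.single c0 (b+1)) (1:K) ∈ I)
    (hlight : ∀ i, i ≠ c0 → i ≠ i0 →
      monomial (Finsupp.single i 1 + Finsupp.single c0 1) (1:K) ∈ I) :
    ∀ (k : ℕ) (α : Fin n →₀ ℕ) (co : K),
      k ≤ α c0 →
      k * (b+1) ≤ b * (∑ t ∈ (Finset.univ.erase c0).erase i0, α t) + α c0 →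
      k * (b+1) ≤ (b+1) * (∑ t ∈ (Finset.univ.erase c0).erase i0, α t) + α i0 →
      monomial α co ∈ I ^ k := by
  intro k
  induction k with
  | zero =>
    intro α co _ _ _
    rw [pow_zero, Ideal.one_eq_top]
    exact Submodule.mem_top
  | succ k ih =>
    intro α co h1 h2 h3
    set Sset := (Finset.univ.erase c0).erase i0 with hSset
    set σ := ∑ t ∈ Sset, α t with hσdef
    have hc0S : c0 ∉ Sset := by
      intro h
      exact Finset.notMem_erase c0 Finset.univ (Finset.mem_erase.1 h).2
    have hi0S : i0 ∉ Sset := Finset.notMem_erase i0 _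
    by_cases hσ : 0 < σ
    · -- use a light generator
      obtain ⟨i, hiS, hαi⟩ : ∃ i ∈ Sset, 0 < α i := by
        by_contra hcon
        push_neg at hcon
        have : σ = 0 := Finset.sum_eq_zero fun t ht => Nat.le_zero.1 (hcon t ht)
        omega
      have hii0 : i ≠ i0 := (Finset.mem_erase.1 hiS).1
      have hic0 : i ≠ c0 := (Finset.mem_erase.1 (Finset.mem_erase.1 hiS).2).1
      set g : Fin n →₀ ℕ := Finsupp.single i 1 + Finsupp.single c0 1 with hgdef
      have hgc0 : g c0 = 1 := by
        rw [hgdef, Finsupp.add_apply, Finsupp.single_eq_of_ne' hic0, Finsupp.single_eq_same]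
      have hgi0 : g i0 = 0 := by
        rw [hgdef, Finsupp.add_apply, Finsupp.single_eq_of_ne' hii0,
          Finsupp.single_eq_of_ne' (fun h => hi0 h.symm), add_zero]
      have hgS : ∀ t ∈ Sset, g t = if i = t then 1 else 0 := by
        intro t ht
        have htc0 : t ≠ c0 := (Finset.mem_erase.1 (Finset.mem_erase.1 ht).2).1
        rw [hgdef, Finsupp.add_apply, Finsupp.single_eq_of_ne' (fun h => htc0 h.symm),
          Finsupp.single_apply, add_zero]
      have hgle : g ≤ α := by
        rw [Finsupp.le_def]
        intro t
        by_cases h' : t = c0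
        · rw [h', hgc0]; omega
        by_cases h'' : t = i
        · rw [h'', hgdef, Finsupp.add_apply, Finsupp.single_eq_same,
            Finsupp.single_eq_of_ne' (fun h => hic0 h.symm)]
          omega
        · rw [hgdef, Finsupp.add_apply, Finsupp.single_eq_of_ne' (fun h => h'' h.symm),
            Finsupp.single_eq_of_ne' (fun h => h' h.symm)]
          omega
      have hgsum : ∑ t ∈ Sset, g t = 1 := by
        rw [Finset.sum_congr rfl hgS, Finset.sum_ite_eq, if_pos hiS]
      set σ' := ∑ t ∈ Sset, (α - g) t with hσ'def
      have hsplit : σ' + 1 = σ := by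
        rw [hσ'def, hσdef, ← hgsum, ← Finset.sum_add_distrib]
        refine Finset.sum_congr rfl fun t _ => ?_
        rw [Finsupp.tsub_apply]
        exact tsub_add_cancel_of_le (Finsupp.le_def.1 hgle t)
      have hac0 : (α - g) c0 + 1 = α c0 := by
        rw [Finsupp.tsub_apply, hgc0]
        omega
      have hai0 : (α - g) i0 = α i0 := by
        rw [Finsupp.tsub_apply, hgi0]
        omega
      have hrec : monomial (α - g) co ∈ I ^ k := by
        refine ih (α - g) co ?_ ?_ ?_
        · omega
        · rw [← hσ'def] at *
          have h2' : (k+1)*(b+1) ≤ b*(σ'+1) + ((α - g) c0 + 1) := by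
            rw [hsplit, hac0]; exact h2
          have e1 : (k+1)*(b+1) = k*(b+1) + (b+1) := by ring
          have e2 : b*(σ'+1) = b*σ' + b := by ring
          linarith
        · rw [← hσ'def] at *
          have h3' : (k+1)*(b+1) ≤ (b+1)*(σ'+1) + α i0 := by
            rw [hsplit]; exact h3
          have e1 : (k+1)*(b+1) = k*(b+1) + (b+1) := by ring
          have e3 : (b+1)*(σ'+1) = (b+1)*σ' + (b+1) := by ring
          rw [hai0]
          linarith
      have hfact : monomial α co = monomial g (1:K) * monomial (α - g) co := by
        rw [monomial_mul, one_mul, add_tsub_cancel_of_le hgle]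
      rw [hfact, pow_succ']
      exact Ideal.mul_mem_mul (hlight i hic0 hii0) hrec
    · -- use the heavy generator
      have hσ0 : σ = 0 := by omega
      have hkb : k * (b+1) + (b+1) = (k+1)*(b+1) := by ring
      have h2' : (k+1)*(b+1) ≤ α c0 := by
        rw [hσ0, mul_zero, zero_add] at h2; exact h2
      have h3' : (k+1)*(b+1) ≤ α i0 := by
        rw [hσ0, mul_zero, zero_add] at h3; exact h3
      set g : Fin n →₀ ℕ := Finsupp.single i0 (b+1) + Finsupp.single c0 (b+1) with hgdef
      have hgc0 : g c0 = b+1 := by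
        rw [hgdef, Finsupp.add_apply, Finsupp.single_eq_of_ne' hi0, Finsupp.single_eq_same]
        omega
      have hgi0 : g i0 = b+1 := by
        rw [hgdef, Finsupp.add_apply, Finsupp.single_eq_same,
          Finsupp.single_eq_of_ne' (fun h => hi0 h.symm), add_zero]
      have hgS : ∀ t ∈ Sset, g t = 0 := by
        intro t ht
        have htc0 : t ≠ c0 := (Finset.mem_erase.1 (Finset.mem_erase.1 ht).2).1
        have hti0 : t ≠ i0 := (Finset.mem_erase.1 ht).1
        rw [hgdef, Finsupp.add_apply, Finsupp.single_eq_of_ne' (fun h => htc0 h.symm),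
          Finsupp.single_eq_of_ne' (fun h => hti0 h.symm), add_zero]
      have hgle : g ≤ α := by
        rw [Finsupp.le_def]
        intro t
        by_cases h' : t = c0
        · rw [h', hgc0]; omega
        by_cases h'' : t = i0
        · rw [h'', hgi0]; omega
        · rw [hgdef, Finsupp.add_apply, Finsupp.single_eq_of_ne' (fun h => h'' h.symm),
            Finsupp.single_eq_of_ne' (fun h => h' h.symm)]
          omega
      set σ' := ∑ t ∈ Sset, (α - g) t with hσ'def
      have hsplit : σ' = 0 := by
        rw [hσ'def]
        refine Finset.sum_eq_zero fun t ht => ?_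
        rw [Finsupp.tsub_apply]
        have h0 : α t = 0 := by
          have : α t ≤ σ := Finset.single_le_sum (f := fun t => α t) (fun t _ => Nat.zero_le _) ht
          omega
        omega
      have hac0 : (α - g) c0 + (b+1) = α c0 := by
        rw [Finsupp.tsub_apply, hgc0]; omega
      have hai0 : (α - g) i0 + (b+1) = α i0 := by
        rw [Finsupp.tsub_apply, hgi0]; omega
      have hklek : k ≤ k * (b+1) := by
        calc k = k * 1 := (mul_one k).symm
        _ ≤ k * (b+1) := Nat.mul_le_mul_left k (by omega)
      have hrec : monomial (α - g) co ∈ I ^ k := by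
        refine ih (α - g) co ?_ ?_ ?_
        · omega
        · rw [← hσ'def, hsplit, mul_zero, zero_add]; omega
        · rw [← hσ'def, hsplit, mul_zero, zero_add]; omega
      have hfact : monomial α co = monomial g (1:K) * monomial (α - g) co := by
        rw [monomial_mul, one_mul, add_tsub_cancel_of_le hgle]
      rw [hfact, pow_succ']
      exact Ideal.mul_mem_mul hheavy hrec

end StarNormal

open StarNormal

/-- Let `G_ω` be an edge-weighted star graph on `n` vertices (every edge joins a vertex to
the center, the vertex `n`, i.e. the last element of `Fin n`). If the edge ideal
`I(G_ω)` is integrally closed, then it is normal: every power `I(G_ω)^k`, `k ≥ 1`,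
is integrally closed. -/
theorem edgeIdeal_star_normal_of_intClosed
    (K : Type*) [Field K] {n : ℕ} (hn : 1 ≤ n)
    (G : SimpleGraph (Fin n)) (w : Sym2 (Fin n) → ℕ)
    (hG : ∀ i j : Fin n, G.Adj i j ↔
      (i ≠ j ∧ (i = (⟨n - 1, by omega⟩ : Fin n) ∨ j = (⟨n - 1, by omega⟩ : Fin n))))
    (hw : ∀ e ∈ G.edgeSet, 1 ≤ w e)
    (hic : IsIntClosed (edgeIdeal K G w)) :
    ∀ k : ℕ, 1 ≤ k → IsIntClosed (edgeIdeal K G w ^ k) := by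
  intro k hk
  classical
  by_cases hn1 : n = 1
  · -- the graph has no edges
    have hbot : edgeIdeal K G w = ⊥ := by
      rw [edgeIdeal]
      convert Ideal.span_empty
      rw [Set.eq_empty_iff_forall_notMem]
      rintro m ⟨i, j, hadj, -⟩
      have hij : i = j := by
        apply Fin.ext
        have h1 := i.isLt; have h2 := j.isLt
        omega
      exact G.ne_of_adj hadj hij
    rw [hbot]
    have hbk : (⊥ : Ideal (MvPolynomial (Fin n) K)) ^ k = ⊥ :=
      le_antisymm (Ideal.pow_le_self (by omega)) bot_le
    rw [hbk]
    apply Set.Subset.antisymm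
    · rintro f ⟨m, hm, cf, hcf, heq⟩
      have hz : ∀ i ∈ Finset.Icc 1 m, cf i * f ^ (m - i) = 0 := by
        intro i hi
        have hmem := hcf i hi
        have hle : (⊥ : Ideal (MvPolynomial (Fin n) K)) ^ i ≤ ⊥ :=
          Ideal.pow_le_self (by rw [Finset.mem_Icc] at hi; omega)
        have : cf i = 0 := by simpa using hle hmem
        rw [this, zero_mul]
      rw [Finset.sum_congr rfl hz, Finset.sum_const_zero, add_zero] at heq
      have : f = 0 := (pow_eq_zero_iff (by omega : m ≠ 0)).1 heq
      simp [this]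
    · exact self_subset_intClosure _
  -- main case : n ≥ 2
  have hn2 : 2 ≤ n := by omega
  set c0 : Fin n := ⟨n - 1, by omega⟩ with hc0
  set W : Fin n → ℕ := fun i => w s(i, c0) with hWdef
  set E : Set (Fin n →₀ ℕ) :=
    {d | ∃ i, i ≠ c0 ∧ d = Finsupp.single i (W i) + Finsupp.single c0 (W i)} with hE
  have hXX : ∀ (i : Fin n) (m : ℕ),
      (X i : MvPolynomial (Fin n) K) ^ m * X c0 ^ m =
      monomial (Finsupp.single i m + Finsupp.single c0 m) (1:K) := by
    intro i m
    rw [X_pow_eq_monomial, X_pow_eq_monomial, monomial_mul, one_mul]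
  have hedge : edgeIdeal K G w = Ideal.span ((fun d => monomial d (1:K)) '' E) := by
    rw [edgeIdeal]
    congr 1
    ext m
    constructor
    · rintro ⟨i, j, hadj, rfl⟩
      rw [hG] at hadj
      obtain ⟨hne, hij | hij⟩ := hadj
      · subst hij
        refine ⟨Finsupp.single j (W j) + Finsupp.single c0 (W j), ⟨j, Ne.symm hne, rfl⟩, ?_⟩
        rw [show s(c0, j) = s(j, c0) from Sym2.eq_swap, mul_comm]
        exact (hXX j (W j)).symm
      · subst hij
        exact ⟨Finsupp.single i (W i) + Finsupp.single c0 (W i), ⟨i, hne, rfl⟩,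
          (hXX i (W i)).symm⟩
    · rintro ⟨d, ⟨i, hne, rfl⟩, rfl⟩
      exact ⟨i, c0, (hG i c0).2 ⟨hne, Or.inr rfl⟩, (hXX i (W i)).symm⟩
  have hW1 : ∀ i, i ≠ c0 → 1 ≤ W i := by
    intro i hi
    exact hw _ (G.mem_edgeSet.2 ((hG i c0).2 ⟨hi, Or.inr rfl⟩))
  have hgen : ∀ i, i ≠ c0 →
      monomial (Finsupp.single i (W i) + Finsupp.single c0 (W i)) (1:K) ∈ edgeIdeal K G w := by
    intro i hi
    rw [hedge]
    exact Ideal.subset_span ⟨_, ⟨i, hi, rfl⟩, rfl⟩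
  have hic' : intClosure (edgeIdeal K G w) = ↑(edgeIdeal K G w) := hic
  -- being integrally closed forces at most one weight ≥ 2
  have hone : ∀ i j : Fin n, i ≠ c0 → j ≠ c0 → i ≠ j → 2 ≤ W i → 2 ≤ W j → False := by
    intro i j hic0 hjc0 hij hWi hWj
    set a := W i with hA
    set b := W j with hB
    set p := (a + 1) / 2 with hp
    set q := (b + 1) / 2 with hq
    set r := a + b with hr
    set ν : Fin n →₀ ℕ :=
      Finsupp.single i p + Finsupp.single j q + Finsupp.single c0 r with hν
    set f : MvPolynomial (Fin n) K := monomial ν 1 with hfd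
    have hsq : f * f ∈ (edgeIdeal K G w) ^ 2 := by
      have hg1 := hgen i hic0
      have hg2 := hgen j hjc0
      have key : ν + ν = (Finsupp.single i a + Finsupp.single c0 a)
          + ((Finsupp.single j b + Finsupp.single c0 b)
          + (Finsupp.single i (2*p-a) + Finsupp.single j (2*q-b)
             + Finsupp.single c0 (2*r-a-b))) := by
        ext t
        rw [hν]
        simp only [Finsupp.add_apply, Finsupp.single_apply]
        by_cases h1 : i = t
        · by_cases h2 : j = t
          · exact absurd (h1.trans h2.symm) hij
          by_cases h3 : c0 = t
          · exact absurd (h1.trans h3.symm) hic0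
          · simp only [if_pos h1, if_neg h2, if_neg h3]
            omega
        by_cases h2 : j = t
        · by_cases h3 : c0 = t
          · exact absurd (h2.trans h3.symm) hjc0
          · simp only [if_neg h1, if_pos h2, if_neg h3]
            omega
        by_cases h3 : c0 = t
        · simp only [if_neg h1, if_neg h2, if_pos h3]
          omega
        · simp only [if_neg h1, if_neg h2, if_neg h3]
          omega
      have hff : f * f = monomial (Finsupp.single i a + Finsupp.single c0 a) (1:K) *
          (monomial (Finsupp.single j b + Finsupp.single c0 b) (1:K) *
           monomial (Finsupp.single i (2*p-a) + Finsupp.single j (2*q-b)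
             + Finsupp.single c0 (2*r-a-b)) (1:K)) := by
        rw [hfd, monomial_mul, monomial_mul, monomial_mul, key]
        norm_num
      rw [hff, pow_two]
      exact Ideal.mul_mem_mul hg1 (Ideal.mul_mem_right _ _ hg2)
    have hfint : f ∈ intClosure (edgeIdeal K G w) := by
      refine ⟨2, two_pos, fun t => if t = 2 then -(f * f) else 0, ?_, ?_⟩
      · intro t ht
        show (if t = 2 then -(f * f) else 0) ∈ edgeIdeal K G w ^ t
        by_cases h2 : t = 2
        · rw [if_pos h2, h2]
          exact neg_mem hsq
        · rw [if_neg h2]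
          exact Submodule.zero_mem _
      · have hIcc : Finset.Icc 1 2 = {1, 2} := rfl
        rw [hIcc, Finset.sum_insert (by decide : (1:ℕ) ∉ ({2} : Finset ℕ)),
          Finset.sum_singleton]
        norm_num
        ring
    rw [hic'] at hfint
    rw [hedge] at hfint
    have hcoeff : MvPolynomial.coeff ν f ≠ 0 := by
      rw [hfd, MvPolynomial.coeff_monomial, if_pos rfl]
      exact one_ne_zero
    obtain ⟨g, ⟨l, hl, rfl⟩, hle⟩ :=
      exists_le_of_mem_span (SetLike.mem_coe.1 hfint) ν hcoeff
    have hval := Finsupp.le_def.1 hle l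
    rw [hν] at hval
    simp only [Finsupp.add_apply] at hval
    rw [Finsupp.single_eq_same, Finsupp.single_eq_of_ne' (fun h => hl h.symm), add_zero] at hval
    by_cases hli : l = i
    · subst hli
      rw [Finsupp.single_eq_same, Finsupp.single_eq_of_ne' (fun h => hij h.symm),
        Finsupp.single_eq_of_ne' (fun h => hic0 h.symm)] at hval
      omega
    by_cases hlj : l = j
    · subst hlj
      rw [Finsupp.single_eq_same, Finsupp.single_eq_of_ne' hij,
        Finsupp.single_eq_of_ne' (fun h => hjc0 h.symm)] at hval
      omega
    · rw [Finsupp.single_eq_of_ne' (fun h => hli h.symm),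
        Finsupp.single_eq_of_ne' (fun h => hlj h.symm),
        Finsupp.single_eq_of_ne' (fun h => hl h.symm)] at hval
      have := hW1 l hl
      omega
  -- choose the (possibly) heavy vertex i0
  obtain ⟨i0, hi0c, hlight⟩ :
      ∃ i0, i0 ≠ c0 ∧ ∀ i, i ≠ c0 → i ≠ i0 → W i = 1 := by
    by_cases hex : ∃ i, i ≠ c0 ∧ 2 ≤ W i
    · obtain ⟨i0, h1, h2⟩ := hex
      refine ⟨i0, h1, fun i hi hii => ?_⟩
      have := hW1 i hi
      by_contra hne
      exact hone i0 i h1 hi (fun h => hii h.symm) h2 (by omega)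
    · push_neg at hex
      refine ⟨⟨0, by omega⟩, ?_, fun i hi _ => by have := hW1 i hi; have := hex i hi; omega⟩
      intro h
      have := congrArg Fin.val h
      rw [hc0] at this
      simp at this
      omega
  have ha : 1 ≤ W i0 := hW1 i0 hi0c
  set b := W i0 - 1 with hb
  have hab : W i0 = b + 1 := by omega
  -- the three linear bounds contain the ideal
  have hIA : edgeIdeal K G w ≤ D K (uA c0) 1 := by
    rw [hedge, Ideal.span_le]
    rintro m ⟨d, ⟨i, hi, rfl⟩, rfl⟩
    dsimp only
    rw [SetLike.mem_coe, mem_D]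
    intro e he
    rw [MvPolynomial.support_monomial, if_neg (one_ne_zero : (1:K) ≠ 0),
      Finset.mem_singleton] at he
    subst he
    rw [wdeg_uA, Finsupp.add_apply, Finsupp.single_eq_of_ne' hi, Finsupp.single_eq_same]
    have := hW1 i hi
    omega
  have hIB : edgeIdeal K G w ≤ D K (uB i0 c0 b) (b + 1) := by
    rw [hedge, Ideal.span_le]
    rintro m ⟨d, ⟨i, hi, rfl⟩, rfl⟩
    dsimp only
    rw [SetLike.mem_coe, mem_D]
    intro e he
    rw [MvPolynomial.support_monomial, if_neg (one_ne_zero : (1:K) ≠ 0),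
      Finset.mem_singleton] at he
    subst he
    rw [wdeg_uB i0 c0 hi0c]
    have hec0 : (Finsupp.single i (W i) + Finsupp.single c0 (W i)) c0 = W i := by
      rw [Finsupp.add_apply, Finsupp.single_eq_of_ne' hi, Finsupp.single_eq_same, zero_add]
    by_cases hii0 : i = i0
    · subst hii0
      rw [hec0, ← hab]
      exact Nat.le_add_left _ _
    · have hwi : W i = 1 := hlight i hi hii0
      have hiS : i ∈ (Finset.univ.erase c0).erase i0 :=
        Finset.mem_erase.2 ⟨hii0, Finset.mem_erase.2 ⟨hi, Finset.mem_univ i⟩⟩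
      have hei : (Finsupp.single i (W i) + Finsupp.single c0 (W i)) i = 1 := by
        rw [Finsupp.add_apply, Finsupp.single_eq_same,
          Finsupp.single_eq_of_ne' (fun h => hi h.symm), add_zero, hwi]
      have hσ : 1 ≤ ∑ t ∈ (Finset.univ.erase c0).erase i0,
          (Finsupp.single i (W i) + Finsupp.single c0 (W i)) t := by
        rw [← hei]
        exact Finset.single_le_sum (f := fun t =>
          (Finsupp.single i (W i) + Finsupp.single c0 (W i)) t) (fun t _ => Nat.zero_le _) hiS
      have hbb : b * 1 ≤ b * ∑ t ∈ (Finset.univ.erase c0).erase i0,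
          (Finsupp.single i (W i) + Finsupp.single c0 (W i)) t := Nat.mul_le_mul_left b hσ
      rw [hec0]
      omega
  have hIC : edgeIdeal K G w ≤ D K (uC i0 c0 b) (b + 1) := by
    rw [hedge, Ideal.span_le]
    rintro m ⟨d, ⟨i, hi, rfl⟩, rfl⟩
    dsimp only
    rw [SetLike.mem_coe, mem_D]
    intro e he
    rw [MvPolynomial.support_monomial, if_neg (one_ne_zero : (1:K) ≠ 0),
      Finset.mem_singleton] at he
    subst he
    rw [wdeg_uC i0 c0 hi0c]
    by_cases hii0 : i = i0
    · have hei0 : (Finsupp.single i (W i) + Finsupp.single c0 (W i)) i0 = b + 1 := by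
        rw [hii0]
        rw [Finsupp.add_apply, Finsupp.single_eq_same,
          Finsupp.single_eq_of_ne' (fun h => hi0c h.symm), add_zero, hab]
      rw [hei0]
      exact Nat.le_add_left _ _
    · have hwi : W i = 1 := hlight i hi hii0
      have hiS : i ∈ (Finset.univ.erase c0).erase i0 :=
        Finset.mem_erase.2 ⟨hii0, Finset.mem_erase.2 ⟨hi, Finset.mem_univ i⟩⟩
      have hei : (Finsupp.single i (W i) + Finsupp.single c0 (W i)) i = 1 := by
        rw [Finsupp.add_apply, Finsupp.single_eq_same,
          Finsupp.single_eq_of_ne' (fun h => hi h.symm), add_zero, hwi]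
      have hσ : 1 ≤ ∑ t ∈ (Finset.univ.erase c0).erase i0,
          (Finsupp.single i (W i) + Finsupp.single c0 (W i)) t := by
        rw [← hei]
        exact Finset.single_le_sum (f := fun t =>
          (Finsupp.single i (W i) + Finsupp.single c0 (W i)) t) (fun t _ => Nat.zero_le _) hiS
      have hbb : (b+1) * 1 ≤ (b+1) * ∑ t ∈ (Finset.univ.erase c0).erase i0,
          (Finsupp.single i (W i) + Finsupp.single c0 (W i)) t := Nat.mul_le_mul_left (b+1) hσ
      omega
  -- conclude
  apply Set.Subset.antisymm
  · intro f hf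
    have hfA : f ∈ D K (uA c0) k := by
      have h1 := D_intClosed (K := K) (uA c0) (k * 1)
        (intClosure_mono (pow_le_D hIA k) hf)
      rwa [mul_one] at h1
    have hfB : f ∈ D K (uB i0 c0 b) (k * (b+1)) :=
      D_intClosed _ _ (intClosure_mono (pow_le_D hIB k) hf)
    have hfC : f ∈ D K (uC i0 c0 b) (k * (b+1)) :=
      D_intClosed _ _ (intClosure_mono (pow_le_D hIC k) hf)
    rw [SetLike.mem_coe, ← MvPolynomial.support_sum_monomial_coeff f]
    refine Submodule.sum_mem _ (fun α hα => ?_)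
    refine monomial_mem_pow i0 c0 hi0c b _ ?_ ?_ k α _ ?_ ?_ ?_
    · have := hgen i0 hi0c
      rwa [hab] at this
    · intro i hi hii
      have := hgen i hi
      rwa [hlight i hi hii] at this
    · have := hfA α hα
      rwa [wdeg_uA] at this
    · have := hfB α hα
      rwa [wdeg_uB i0 c0 hi0c] at this
    · have := hfC α hα
      rwa [wdeg_uC i0 c0 hi0c] at this
  · exact self_subset_intClosure _
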